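/- Let P(·;·) : X × X → ℝ be such that P(·;w) is convex differentiable for each w, with ∇P(y;y) = ∇F(y) for all y ∈ X (gradient consistency). Let τ > 0 and x̂(y) be the unique minimizer over X of x ↦ P(x;y) + (τ/2)(x - y)ᵀQ(x - y) + g(x), with Q positive definite with smallest eigenvalue q > 0, and g convex. Then (y - x̂(y))ᵀ∇F(y) + g(y) - g(x̂(y)) ≥ qτ‖x̂(y) - y‖². -/

import Mathlib

open scoped RealInnerProductSpace
open Filter Topology

/-- Descent property of the approximate best response with a general convex
surrogate `P(·;y)` (gradient consistent with `F`) and quadratic regularizer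
built from a uniformly positive definite symmetric `Q`. -/
theorem stmt3 {n : ℕ} (X : Set (EuclideanSpace ℝ (Fin n)))
    (hXne : X.Nonempty) (hXcl : IsClosed X) (hXcv : Convex ℝ X)
    (F g : EuclideanSpace ℝ (Fin n) → ℝ)
    (P : EuclideanSpace ℝ (Fin n) → EuclideanSpace ℝ (Fin n) → ℝ)
    (Q : EuclideanSpace ℝ (Fin n) →L[ℝ] EuclideanSpace ℝ (Fin n))
    (τ q : ℝ) (hτ : 0 < τ) (hq : 0 < q)
    (hF : Differentiable ℝ F)
    (hg : ConvexOn ℝ Set.univ g) (hgc : Continuous g)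
    (hPconv : ∀ w, ConvexOn ℝ X (fun x => P x w))
    (hPdiff : ∀ w, Differentiable ℝ (fun x => P x w))
    (hgradcons : ∀ y ∈ X, gradient (fun x => P x y) y = gradient F y)
    (hQsym : ∀ z w : EuclideanSpace ℝ (Fin n), ⟪Q z, w⟫ = ⟪z, Q w⟫)
    (hQpd : ∀ z : EuclideanSpace ℝ (Fin n), q * ‖z‖ ^ 2 ≤ ⟪z, Q z⟫)
    (y : EuclideanSpace ℝ (Fin n)) (hy : y ∈ X)
    (xhat : EuclideanSpace ℝ (Fin n)) (hxhatX : xhat ∈ X)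
    (hmin : ∀ x ∈ X,
      P xhat y + τ / 2 * ⟪xhat - y, Q (xhat - y)⟫ + g xhat ≤
        P x y + τ / 2 * ⟪x - y, Q (x - y)⟫ + g x) :
    q * τ * ‖xhat - y‖ ^ 2 ≤ ⟪y - xhat, gradient F y⟫ + g y - g xhat := by
  set d : EuclideanSpace ℝ (Fin n) := xhat - y with hd
  set c : ℝ := ⟪d, Q d⟫ with hc
  have hc0 : 0 ≤ c := le_trans (by positivity) (hQpd d)
  set A : ℝ := P xhat y + g xhat - P y y - g y with hA
  -- Step A: for all t ∈ (0,1], A ≤ τ/2*(t-2)*c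
  have stepA : ∀ t ∈ Set.Ioc (0:ℝ) 1, A ≤ τ/2 * (t-2) * c := by
    intro t ht
    have ht0 : 0 < t := ht.1
    have h1t : 0 ≤ 1 - t := by linarith [ht.2]
    set xt : EuclideanSpace ℝ (Fin n) := (1-t) • xhat + t • y with hxt
    have hxtX : xt ∈ X := hXcv hxhatX hy h1t ht0.le (by ring)
    have hsub : xt - y = (1-t) • d := by
      rw [hxt, hd]; module
    have hQt : ⟪xt - y, Q (xt - y)⟫ = (1-t)^2 * c := by
      rw [hsub, map_smul, real_inner_smul_left, real_inner_smul_right, hc]; ring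
    have hP : P xt y ≤ (1-t) * P xhat y + t * P y y := by
      simpa using (hPconv y).2 hxhatX hy h1t ht0.le (by ring)
    have hG : g xt ≤ (1-t) * g xhat + t * g y := by
      simpa using hg.2 (Set.mem_univ xhat) (Set.mem_univ y) h1t ht0.le (by ring)
    have hm := hmin xt hxtX
    rw [hQt] at hm
    have key : t * A ≤ t * (τ/2 * (t-2) * c) := by nlinarith [hm, hP, hG]
    exact le_of_mul_le_mul_left (by linarith [key]) ht0
  -- Step B: A ≤ -(τ*c)
  have stepB : A ≤ -(τ * c) := by
    have htend : Tendsto (fun t : ℝ => τ/2 * (t-2) * c) (𝓝[>] (0:ℝ))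
        (𝓝 (τ/2 * ((0:ℝ)-2) * c)) := by
      apply Tendsto.mono_left _ nhdsWithin_le_nhds
      have hcont : Continuous fun t : ℝ => τ/2 * (t-2) * c :=
        (continuous_const.mul (continuous_id.sub continuous_const)).mul continuous_const
      exact hcont.tendsto 0
    have hev : ∀ᶠ t in 𝓝[>] (0:ℝ), A ≤ τ/2 * (t-2) * c := by
      filter_upwards [Ioc_mem_nhdsGT_of_mem (Set.left_mem_Ico.2 one_pos)] with t ht
      exact stepA t ht
    have := ge_of_tendsto htend hev
    linarith [this]
  -- Step C: ⟪gradient F y, d⟫ ≤ P xhat y - P y y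
  have stepC : ⟪gradient F y, d⟫ ≤ P xhat y - P y y := by
    set f : EuclideanSpace ℝ (Fin n) → ℝ := fun x => P x y with hf
    have hderiv : HasDerivAt (fun t : ℝ => f (y + t • d)) ⟪gradient f y, d⟫ 0 := by
      have h1 : HasGradientAt f (gradient f y) (y + (0:ℝ) • d) := by
        simpa using (hPdiff y y).hasGradientAt
      have h2 : HasDerivAt (fun t : ℝ => y + t • d) d 0 := by
        simpa using ((hasDerivAt_id (0:ℝ)).smul_const d).const_add y
      have := h1.hasFDerivAt.comp_hasDerivAt 0 h2
      simp [InnerProductSpace.toDual_apply_apply] at this ⊢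
      exact this
    have hslope : Tendsto (slope (fun t : ℝ => f (y + t • d)) 0) (𝓝[>] (0:ℝ))
        (𝓝 ⟪gradient f y, d⟫) := by
      apply Tendsto.mono_left (hasDerivAt_iff_tendsto_slope.mp hderiv)
      exact nhdsWithin_mono 0 fun t ht => ne_of_gt ht
    have hev : ∀ᶠ t in 𝓝[>] (0:ℝ), slope (fun t : ℝ => f (y + t • d)) 0 t
        ≤ P xhat y - P y y := by
      filter_upwards [Ioc_mem_nhdsGT_of_mem (Set.left_mem_Ico.2 one_pos)] with t ht
      have ht0 : 0 < t := ht.1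
      have h1t : 0 ≤ 1 - t := by linarith [ht.2]
      have hmem : y + t • d = (1-t) • y + t • xhat := by rw [hd]; module
      have hcv : f (y + t • d) ≤ (1-t) * f y + t * f xhat := by
        rw [hmem]
        simpa using (hPconv y).2 hy hxhatX h1t ht0.le (by ring)
      have hy0 : f (y + (0:ℝ) • d) = f y := by norm_num
      rw [slope_def_field, hy0, sub_zero, div_le_iff₀ ht0]
      nlinarith [hcv]
    have := le_of_tendsto hslope hev
    rwa [hgradcons y hy] at this
  -- combine
  have hτc : τ * (q * ‖d‖^2) ≤ τ * c := by
    exact mul_le_mul_of_nonneg_left (hQpd d) hτ.le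
  have hinner : ⟪y - xhat, gradient F y⟫ = -⟪gradient F y, d⟫ := by
    rw [real_inner_comm, hd, ← inner_neg_right]
    congr 1; abel
  rw [hinner]
  nlinarith [stepB, stepC, hτc]
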